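/- arXiv:1509.02122 — 2 statements merged into one kernel-verified Lean document; each statement's English description precedes it below -/
import Mathlib

section
/- For a finite simple graph G = (V,E), a subset Y ⊆ E is a multicut of G (i.e., equals E_Π for some decomposition Π of G) if and only if every cycle C of G satisfies |C ∩ Y| ≠ 1. -/
/-- A decomposition of a graph `G`: a partition of the vertex set such that
every block induces a connected subgraph. -/
def IsDecomposition {V : Type*} (G : SimpleGraph V) (P : Set (Set V)) : Prop :=
  Setoid.IsPartition P ∧ ∀ B ∈ P, (G.induce B).Connected

/-- The multicut associated to a partition: the edges of `G` whose endpoints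
lie in distinct blocks. -/
def multicutSet {V : Type*} (G : SimpleGraph V) (P : Set (Set V)) : Set (Sym2 V) :=
  {e | e ∈ G.edgeSet ∧ ∀ B ∈ P, ¬ (∀ x ∈ e, x ∈ B)}

private lemma walk_same_block {V : Type*} {G : SimpleGraph V} {P : Set (Set V)}
    (hP : Setoid.IsPartition P) {Y : Set (Sym2 V)} (hY : Y = multicutSet G P) :
    ∀ {a b : V} (p : G.Walk a b), (∀ e ∈ p.edges, e ∉ Y) → ∃ B ∈ P, a ∈ B ∧ b ∈ B := by
  intro a b p
  induction p with
  | nil =>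
    intro _
    obtain ⟨B, ⟨hBP, haB⟩, _⟩ := hP.2 _
    exact ⟨B, hBP, haB, haB⟩
  | @cons a c b h q ih =>
    intro hall
    have h1 : s(a, c) ∉ Y := hall _ (by simp)
    have h2 : s(a, c) ∈ G.edgeSet := h
    rw [hY] at h1
    simp only [multicutSet, Set.mem_setOf_eq, not_and, not_forall] at h1
    obtain ⟨B, hBP, hB⟩ := h1 h2
    push_neg at hB
    obtain ⟨B', hB'P, hcB', hbB'⟩ := ih (fun e he => hall e (by simp [he]))
    have haB : a ∈ B := hB a (by simp)
    have hcB : c ∈ B := hB c (by simp)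
    obtain ⟨B₀, _, huniq⟩ := hP.2 c
    have : B = B' := (huniq B ⟨hBP, hcB⟩).trans (huniq B' ⟨hB'P, hcB'⟩).symm
    exact ⟨B, hBP, haB, this ▸ hbB'⟩

private lemma aux_reach {V : Type*} {G G' : SimpleGraph V} (hle : G' ≤ G) {y : V} :
    ∀ {a : V} (p : G'.Walk a y),
      (G.induce {x | G'.Reachable x y}).Reachable ⟨a, ⟨p⟩⟩ ⟨y, .refl y⟩
  | _, SimpleGraph.Walk.nil => .refl _
  | _, SimpleGraph.Walk.cons h q =>
    (SimpleGraph.Adj.reachable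
      (by simpa using hle h : (G.induce {x | G'.Reachable x y}).Adj ⟨_, ⟨.cons h q⟩⟩
        ⟨_, ⟨q⟩⟩)).trans (aux_reach hle q)

private lemma induce_reachable_connected {V : Type*} {G G' : SimpleGraph V}
    (hle : G' ≤ G) (y : V) : (G.induce {x | G'.Reachable x y}).Connected := by
  rw [SimpleGraph.connected_iff]
  refine ⟨?_, ⟨⟨y, SimpleGraph.Reachable.refl y⟩⟩⟩
  rintro ⟨a, ha⟩ ⟨b, hb⟩
  obtain ⟨p⟩ := ha
  obtain ⟨q⟩ := hb
  exact (aux_reach hle p).trans (aux_reach hle q).symm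

/-- `Y ⊆ E` is a multicut of `G` iff every cycle of `G` meets `Y` in a number
of edges different from 1. -/
theorem statement2 {V : Type*} [Fintype V] (G : SimpleGraph V)
    (Y : Set (Sym2 V)) (hYE : Y ⊆ G.edgeSet) :
    (∃ P : Set (Set V), IsDecomposition G P ∧ Y = multicutSet G P) ↔
      (∀ (u : V) (w : G.Walk u u), w.IsCircuit →
        {e | e ∈ w.edges ∧ e ∈ Y}.ncard ≠ 1) := by
  classical
  constructor
  · -- forward direction
    rintro ⟨P, ⟨hPart, _⟩, hYmc⟩ u w hw hone
    obtain ⟨e₀, he₀⟩ := Set.ncard_eq_one.mp hone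
    have he₀mem : e₀ ∈ w.edges ∧ e₀ ∈ Y := by
      have : e₀ ∈ ({e₀} : Set (Sym2 V)) := rfl
      rw [← he₀] at this; exact this
    have huniq : ∀ e ∈ w.edges, e ∈ Y → e = e₀ := by
      intro e he hY
      have : e ∈ ({e₀} : Set (Sym2 V)) := he₀ ▸ ⟨he, hY⟩
      simpa using this
    obtain ⟨x, y, rfl⟩ : ∃ x y, e₀ = s(x, y) := by
      induction e₀ using Sym2.ind with
      | _ x y => exact ⟨x, y, rfl⟩
    -- rotate the circuit to start at x
    have hx : x ∈ w.support := SimpleGraph.Walk.fst_mem_support_of_mem_edges w he₀mem.1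
    set w' := w.rotate x hx with hw'
    have hw'circ : w'.IsCircuit := hw.rotate hx
    have hperm : List.Perm w.edges w'.edges := ((w.rotate_edges x hx).perm).symm
    have he₀' : s(x, y) ∈ w'.edges := hperm.mem_iff.mp he₀mem.1
    have hy : y ∈ w'.support := SimpleGraph.Walk.snd_mem_support_of_mem_edges w' he₀'
    set p := w'.takeUntil y hy with hp
    set q := w'.dropUntil y hy with hq
    have happ : w' = p.append q := (w'.take_spec hy).symm
    have hedges : w'.edges = p.edges ++ q.edges := by rw [happ, SimpleGraph.Walk.edges_append]
    have hnodup : (p.edges ++ q.edges).Nodup := hedges ▸ hw'circ.edges_nodup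
    have hsame : ∃ B ∈ P, x ∈ B ∧ y ∈ B := by
      have hcases : s(x, y) ∈ p.edges ∨ s(x, y) ∈ q.edges := by
        rw [← List.mem_append, ← hedges]; exact he₀'
      rcases hcases with hmem | hmem
      · obtain ⟨B, hBP, hyB, hxB⟩ := walk_same_block hPart hYmc q (fun e he hY => by
          have : e = s(x, y) := huniq e (hperm.mem_iff.mpr (hedges ▸ List.mem_append_right _ he)) hY
          exact (List.disjoint_of_nodup_append hnodup) hmem (this ▸ he))
        exact ⟨B, hBP, hxB, hyB⟩
      · obtain ⟨B, hBP, hxB, hyB⟩ := walk_same_block hPart hYmc p (fun e he hY => by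
          have : e = s(x, y) := huniq e (hperm.mem_iff.mpr (hedges ▸ List.mem_append_left _ he)) hY
          exact (List.disjoint_of_nodup_append hnodup) (this ▸ he) hmem)
        exact ⟨B, hBP, hxB, hyB⟩
    obtain ⟨B, hBP, hxB, hyB⟩ := hsame
    have := (hYmc ▸ he₀mem.2).2 B hBP
    exact this (fun z hz => by rcases Sym2.mem_iff.mp hz with rfl | rfl <;> assumption)
  · -- backward direction
    intro hcyc
    set G' := G.deleteEdges Y with hG'
    have hle : G' ≤ G := SimpleGraph.deleteEdges_le Y
    have hG'edge : G'.edgeSet = G.edgeSet \ Y := SimpleGraph.edgeSet_deleteEdges Y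
    refine ⟨G'.reachableSetoid.classes, ⟨Setoid.isPartition_classes _, ?_⟩, ?_⟩
    · rintro B ⟨z, rfl⟩
      exact induce_reachable_connected hle z
    · ext e
      induction e using Sym2.ind with
      | _ a b =>
        constructor
        · -- Y ⊆ multicut
          intro heY
          refine ⟨hYE heY, ?_⟩
          rintro B ⟨z, rfl⟩ hall
          have hab : G.Adj a b := hYE heY
          have hra : G'.Reachable a z := hall a (by simp)
          have hrb : G'.Reachable b z := hall b (by simp)
          obtain ⟨q⟩ := hrb.trans hra.symm
          let pth : G'.Path b a := q.toPath
          have hpsub : ∀ e ∈ pth.1.edges, e ∈ G.edgeSet :=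
            fun e he => SimpleGraph.edgeSet_mono hle (pth.1.edges_subset_edgeSet he)
          have hedges : (pth.1.transfer G hpsub).edges = pth.1.edges :=
            SimpleGraph.Walk.edges_transfer _ _
          have hnotY : ∀ e ∈ pth.1.edges, e ∉ Y := fun e he hY => by
            have := pth.1.edges_subset_edgeSet he
            rw [hG'edge] at this
            exact this.2 hY
          set w : G.Walk a a := SimpleGraph.Walk.cons hab (pth.1.transfer G hpsub) with hwdef
          have hwe : w.edges = s(a, b) :: pth.1.edges := by
            rw [hwdef, SimpleGraph.Walk.edges_cons, hedges]
          have hcirc : w.IsCircuit := by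
            refine ⟨⟨?_⟩, by simp [hwdef]⟩
            rw [hwe]
            exact List.nodup_cons.mpr ⟨fun hmem => hnotY _ hmem heY, pth.2.isTrail.edges_nodup⟩
          apply hcyc a w hcirc
          have : {e | e ∈ w.edges ∧ e ∈ Y} = {s(a, b)} := by
            ext e
            simp only [Set.mem_setOf_eq, Set.mem_singleton_iff, hwe, List.mem_cons]
            constructor
            · rintro ⟨h1 | h1, h2⟩
              · exact h1
              · exact absurd h2 (hnotY _ h1)
            · rintro rfl; exact ⟨Or.inl rfl, heY⟩
          rw [this, Set.ncard_singleton]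
        · -- multicut ⊆ Y
          rintro ⟨heG, hblocks⟩
          by_contra heY
          have hab : G'.Adj a b := by
            rw [hG', SimpleGraph.deleteEdges_adj]
            exact ⟨heG, heY⟩
          refine hblocks {x | G'.Reachable x a} ⟨a, rfl⟩ ?_
          intro z hz
          rcases Sym2.mem_iff.mp hz with rfl | rfl
          · exact SimpleGraph.Reachable.refl _
          · exact hab.symm.reachable
end

section
/- Let G = (V,E) be a finite simple graph, Y ⊆ E with |C ∩ Y| ≠ 1 for all cycles C, and define the relation u ~ v iff there is a u–v path in G avoiding all edges of Y. Then for every edge uv ∈ E: uv ∈ Y if and only if u is not related to v under the reflexive-transitive closure of adjacency via non-Y edges. -/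
/-- `u` and `v` are related iff there is a walk from `u` to `v` in `G` using no
edge of `Y` (this is the reflexive-transitive closure of adjacency via non-`Y`
edges). -/
def ReachAvoiding {V : Type*} (G : SimpleGraph V) (Y : Set (Sym2 V)) (u v : V) : Prop :=
  Relation.ReflTransGen (fun a b => G.Adj a b ∧ s(a, b) ∉ Y) u v

lemma reachAvoiding_iff {V : Type*} (G : SimpleGraph V) (Y : Set (Sym2 V)) (u v : V) :
    ReachAvoiding G Y u v ↔ (G.deleteEdges Y).Reachable u v := by
  rw [SimpleGraph.reachable_iff_reflTransGen]
  unfold ReachAvoiding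
  have : (fun a b => G.Adj a b ∧ s(a, b) ∉ Y) = (G.deleteEdges Y).Adj := by
    ext a b; simp [SimpleGraph.deleteEdges_adj]
  rw [this]

/-- If no cycle of `G` meets `Y` in exactly one edge, then an edge `uv ∈ E`
belongs to `Y` iff `u` and `v` are not connected by a path avoiding `Y`. -/
theorem statement3 {V : Type*} [Fintype V] (G : SimpleGraph V)
    (Y : Set (Sym2 V)) (hYE : Y ⊆ G.edgeSet)
    (hY : ∀ (u : V) (w : G.Walk u u), w.IsCircuit →
      {e | e ∈ w.edges ∧ e ∈ Y}.ncard ≠ 1) :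
    ∀ u v : V, G.Adj u v → (s(u, v) ∈ Y ↔ ¬ ReachAvoiding G Y u v) := by
  intro u v huv
  constructor
  · intro hmem hreach
    rw [reachAvoiding_iff] at hreach
    classical
    obtain ⟨w⟩ := hreach
    let p : (G.deleteEdges Y).Path u v := w.toPath
    -- edges of p avoid Y
    have hav : ∀ e ∈ p.val.edges, e ∉ Y := by
      intro e he
      have := p.val.edges_subset_edgeSet he
      rw [SimpleGraph.edgeSet_deleteEdges] at this
      exact this.2
    -- transfer to G
    have hsub : ∀ e ∈ p.val.edges, e ∈ G.edgeSet := fun e he =>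
      SimpleGraph.edgeSet_subset_edgeSet.mpr (G.deleteEdges_le Y) (p.val.edges_subset_edgeSet he)
    let q : G.Walk u v := p.val.transfer G hsub
    have hqe : q.edges = p.val.edges := SimpleGraph.Walk.edges_transfer p.val hsub
    have hqp : q.IsPath := p.prop.transfer hsub
    have hne : s(v, u) ∉ q.edges := by
      rw [hqe]
      intro h
      exact hav _ h (by rwa [Sym2.eq_swap])
    have hcyc : (SimpleGraph.Walk.cons huv.symm q).IsCycle :=
      SimpleGraph.Path.cons_isCycle ⟨q, hqp⟩ huv.symm hne
    apply hY v (SimpleGraph.Walk.cons huv.symm q) hcyc.isCircuit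
    have : {e | e ∈ (SimpleGraph.Walk.cons huv.symm q).edges ∧ e ∈ Y} = {s(v, u)} := by
      ext e
      simp only [SimpleGraph.Walk.edges_cons, List.mem_cons, Set.mem_setOf_eq,
        Set.mem_singleton_iff, hqe]
      constructor
      · rintro ⟨h1 | h1, h2⟩
        · exact h1
        · exact absurd h2 (hav _ h1)
      · rintro rfl
        exact ⟨Or.inl rfl, by rwa [Sym2.eq_swap]⟩
    rw [this, Set.ncard_singleton]
  · intro h
    by_contra hmem
    exact h (Relation.ReflTransGen.single ⟨huv, hmem⟩)
end
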